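/- Let G=(V,E) be a finite simple undirected graph with a vertex coloring c:V→C. For a color c₀, let V_{c₀} be the set of vertices of color c₀, and for V'⊆V let N'(V') denote the set of neighbors of V' (in G) whose color is different from c₀. If G'=(V,E') with E'⊆E is a spanning subgraph in which every connected component is colorful (no two vertices of the same color in one component), then for every subset V'⊆V_{c₀}, the number of vertices of V' that are isolated (have degree 0) in G' is at least |V'| − |N'(V')|. -/

import Mathlib

open scoped Classical

/-- In any spanning subgraph `G'` of `G` all of whose connected components are
colorful, for every subset `S` of the vertices of color `c₀`, the number of
vertices of `S` isolated in `G'` is at least `|S| - |N'(S)|`, where `N'(S)` is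
the set of `G`-neighbors of `S` with color different from `c₀`. -/
theorem stmt0 {V C : Type*} [Fintype V] (G : SimpleGraph V) (c : V → C) (c₀ : C)
    (G' : SimpleGraph V) (hsub : G' ≤ G)
    (hcolorful : ∀ u v : V, G'.Reachable u v → c u = c v → u = v)
    (S : Finset V) (hS : ∀ v ∈ S, c v = c₀) :
    S.card - (Finset.univ.filter (fun w => c w ≠ c₀ ∧ ∃ v ∈ S, G.Adj v w)).card ≤
      (S.filter (fun v => ∀ w, ¬ G'.Adj v w)).card := by
  classical
  set N := Finset.univ.filter (fun w => c w ≠ c₀ ∧ ∃ v ∈ S, G.Adj v w) with hN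
  set T := S.filter (fun v => ¬ ∀ w, ¬ G'.Adj v w) with hT
  have hTN : T.card ≤ N.card := by
    have hf : ∀ v ∈ T, ∃ w, G'.Adj v w := by
      intro v hv
      have := (Finset.mem_filter.mp hv).2
      push_neg at this
      exact this
    choose f hfadj using hf
    apply Finset.card_le_card_of_injOn (fun v => if h : v ∈ T then f v h else v)
    · intro v hv
      simp only [Finset.mem_coe] at hv ⊢
      rw [dif_pos hv]
      have hvS : v ∈ S := (Finset.mem_filter.mp hv).1
      have hadj := hfadj v hv
      have hcv : c v = c₀ := hS v hvS
      refine Finset.mem_filter.mpr ⟨Finset.mem_univ _, ?_, v, hvS, hsub hadj⟩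
      intro hcw
      exact G'.ne_of_adj hadj (hcolorful v _ hadj.reachable (hcv.trans hcw.symm))
    · intro v₁ hv₁ v₂ hv₂ heq
      rw [Finset.mem_coe] at hv₁ hv₂
      simp only [dif_pos hv₁, dif_pos hv₂] at heq
      have h1 := hfadj v₁ hv₁
      have h2 := hfadj v₂ hv₂
      rw [heq] at h1
      have : G'.Reachable v₁ v₂ := h1.reachable.trans h2.reachable.symm
      exact hcolorful v₁ v₂ this
        ((hS v₁ (Finset.mem_filter.mp hv₁).1).trans (hS v₂ (Finset.mem_filter.mp hv₂).1).symm)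
  have hsplit : (S.filter (fun v => ∀ w, ¬ G'.Adj v w)).card + T.card = S.card := by
    rw [hT, Finset.card_filter_add_card_filter_not]
  omega
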